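/- Let C be a commutative ring, J a prime ideal of C, and b ∈ C/J such that Spec((C/J)_b) → Spec(C) is an open immersion via the natural map. If s ∈ C is any lift of b, then there exists a splitting of rings C_s ≅ (C/J)_b × B' for some ring B'. -/

import Mathlib

open AlgebraicGeometry CategoryTheory

set_option maxHeartbeats 2000000 in
set_option synthInstance.maxHeartbeats 200000 in
/-- if `Spec((C/J)_b) → Spec C` is an open immersion and `s ∈ C` lifts `b`,
then the localization `C_s` splits as a product `(C/J)_b × B'`. -/
theorem stmt1 (C : Type) [CommRing C] (J : Ideal C) (hp : J.IsPrime)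
    (b : C ⧸ J)
    (h : IsOpenImmersion (Spec.map (CommRingCat.ofHom
      ((algebraMap (C ⧸ J) (Localization.Away b)).comp (Ideal.Quotient.mk J)))))
    (s : C) (hs : Ideal.Quotient.mk J s = b) :
    ∃ (B' : Type) (_ : CommRing B'),
      Nonempty (Localization.Away s ≃+* Localization.Away b × B') := by
  classical
  set R := Localization.Away s with hR
  set D := Localization.Away b with hD
  set φ : C →+* D := (algebraMap (C ⧸ J) D).comp (Ideal.Quotient.mk J) with hφ
  have hφs : IsUnit (φ s) := by
    have h1 : φ s = algebraMap (C ⧸ J) D b := by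
      simp [hφ, hs]
    rw [h1]
    exact IsLocalization.map_units D ⟨b, Submonoid.mem_powers b⟩
  set ψ : R →+* D := Localization.awayLift φ s hφs with hψ
  have hcomp : ψ.comp (algebraMap C R) = φ := IsLocalization.Away.lift_comp (x := s) (S := R) hφs
  -- `Spec.map ψ` is an open immersion
  have hOI : IsOpenImmersion (Spec.map (CommRingCat.ofHom ψ)) := by
    have h2 : CommRingCat.ofHom φ =
        CommRingCat.ofHom (algebraMap C R) ≫ CommRingCat.ofHom ψ := by
      rw [← CommRingCat.ofHom_comp, hcomp]
    have h3 : IsOpenImmersion (Spec.map (CommRingCat.ofHom ψ) ≫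
        Spec.map (CommRingCat.ofHom (algebraMap C R))) := by
      rw [← Spec.map_comp, ← h2]; exact h
    exact AlgebraicGeometry.IsOpenImmersion.of_comp _
      (Spec.map (CommRingCat.ofHom (algebraMap C R)))
  -- surjectivity of ψ
  have hψalg : ∀ c : C, ψ (algebraMap C R c) = φ c := fun c => by
    rw [← hcomp]; rfl
  have hsurj : Function.Surjective ψ := by
    intro z
    obtain ⟨⟨x, m⟩, hz⟩ := IsLocalization.surj (Submonoid.powers b) z
    obtain ⟨n, hn⟩ := m.2
    obtain ⟨c, rfl⟩ := Ideal.Quotient.mk_surjective x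
    have hu : IsUnit (algebraMap C R s) :=
      IsLocalization.map_units R ⟨s, Submonoid.mem_powers s⟩
    obtain ⟨u, hu'⟩ := hu
    refine ⟨algebraMap C R c * ((u⁻¹ : Rˣ) : R) ^ n, ?_⟩
    have hψu : ψ u = φ s := by rw [hu', hψalg]
    have hψuinv : ψ ((u⁻¹ : Rˣ) : R) * φ s = 1 := by
      rw [← hψu, ← map_mul, Units.inv_mul, map_one]
    have hφsb : φ s = algebraMap (C ⧸ J) D b := by simp [hφ, hs]
    have hm : (m : C ⧸ J) = b ^ n := hn.symm
    have hz' : z * (φ s) ^ n = φ c := by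
      rw [hφsb, ← map_pow, ← hm]
      exact hz
    calc ψ (algebraMap C R c * ((u⁻¹ : Rˣ) : R) ^ n)
        = φ c * (ψ ((u⁻¹ : Rˣ) : R)) ^ n := by rw [map_mul, map_pow, hψalg]
      _ = z * (φ s) ^ n * (ψ ((u⁻¹ : Rˣ) : R)) ^ n := by rw [hz']
      _ = z * ((ψ ((u⁻¹ : Rˣ) : R)) * φ s) ^ n := by ring
      _ = z := by rw [hψuinv, one_pow, mul_one]
  -- the range of `comap ψ` is clopen
  have hopen : IsOpen (Set.range (PrimeSpectrum.comap ψ)) :=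
    hOI.1.isOpen_range
  have hclosed : IsClosed (Set.range (PrimeSpectrum.comap ψ)) := by
    rw [range_comap_of_surjective _ ψ hsurj]
    exact PrimeSpectrum.isClosed_zeroLocus _
  obtain ⟨e, he, hUe⟩ := PrimeSpectrum.isClopen_iff.mp ⟨hclosed, hopen⟩
  -- ψ e = 1
  have hψe : ψ e = 1 := by
    have hidem : IsIdempotentElem (ψ e) := by
      unfold IsIdempotentElem; rw [← map_mul, he.eq]
    have hunit : IsUnit (ψ e) := by
      by_contra hne
      obtain ⟨q, hq, hmem⟩ := exists_max_ideal_of_mem_nonunits hne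
      have : (PrimeSpectrum.comap ψ ⟨q, hq.isPrime⟩ : PrimeSpectrum R) ∈
          Set.range (PrimeSpectrum.comap ψ) := ⟨_, rfl⟩
      rw [hUe] at this
      exact this hmem
    exact hunit.mul_left_cancel (by rw [hidem.eq, mul_one])
  -- key: elements of the kernel are killed by e
  have hker : ∀ x : R, ψ x = 0 → e * x = 0 := by
    intro x hx
    apply eq_zero_of_localization
    intro p hpmax
    by_cases hep : e ∈ p
    · have h1e : (1 : C ⧸ J) = 1 := rfl
      have h1ep : (1 : R) - e ∉ p := fun hc => hpmax.ne_top (p.eq_top_of_isUnit_mem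
        (by simpa using p.add_mem hc hep) (by simp))
      have hu : IsUnit (algebraMap R (Localization.AtPrime p) (1 - e)) :=
        IsLocalization.map_units _ (⟨1 - e, h1ep⟩ : p.primeCompl)
      have : algebraMap R (Localization.AtPrime p) ((1 - e) * (e * x)) = 0 := by
        have h5 : (1 - e) * (e * x) = 0 := by
          have h6 : (1 - e) * e = 0 := by rw [sub_mul, one_mul, he.eq, sub_self]
          rw [← mul_assoc, h6, zero_mul]
        rw [h5, map_zero]
      rw [map_mul] at this
      exact (hu.mul_right_eq_zero).mp this
    · -- p is in the image of Spec ψ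
      have hmem : (⟨p, hpmax.isPrime⟩ : PrimeSpectrum R) ∈
          (PrimeSpectrum.basicOpen e : Set (PrimeSpectrum R)) := hep
      rw [← hUe] at hmem
      obtain ⟨q, hq⟩ := hmem
      -- the stalk map at q is an isomorphism
      have hiso : IsIso ((Spec.map (CommRingCat.ofHom ψ)).stalkMap q) :=
        (AlgebraicGeometry.IsOpenImmersion.iff_isIso_stalkMap.mp hOI).2 q
      have harrow := AlgebraicGeometry.Scheme.localRingHom_comp_stalkIso
        (CommRingCat.ofHom ψ) q
      haveI h5 : IsIso ((Spec.stalkIso (CommRingCat.of R)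
          ((PrimeSpectrum.comap (CommRingCat.ofHom ψ).hom) q)).hom ≫
          CommRingCat.ofHom
            (Localization.localRingHom ((PrimeSpectrum.comap (CommRingCat.ofHom ψ).hom) q).asIdeal
              q.asIdeal (CommRingCat.ofHom ψ).hom rfl) ≫
          (Spec.stalkIso (CommRingCat.of D) q).inv) := by
        rw [harrow]; exact hiso
      haveI h6 : IsIso (CommRingCat.ofHom
            (Localization.localRingHom ((PrimeSpectrum.comap (CommRingCat.ofHom ψ).hom) q).asIdeal
              q.asIdeal (CommRingCat.ofHom ψ).hom rfl) ≫
          (Spec.stalkIso (CommRingCat.of D) q).inv) :=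
        IsIso.of_isIso_comp_left (Spec.stalkIso (CommRingCat.of R)
          ((PrimeSpectrum.comap (CommRingCat.ofHom ψ).hom) q)).hom _
      haveI hiso2 : IsIso (CommRingCat.ofHom
          (Localization.localRingHom ((PrimeSpectrum.comap (CommRingCat.ofHom ψ).hom) q).asIdeal
            q.asIdeal (CommRingCat.ofHom ψ).hom rfl)) :=
        IsIso.of_isIso_comp_right _ (Spec.stalkIso (CommRingCat.of D) q).inv
      have hbij : Function.Bijective (Localization.localRingHom
          ((PrimeSpectrum.comap (CommRingCat.ofHom ψ).hom) q).asIdeal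
          q.asIdeal (CommRingCat.ofHom ψ).hom rfl) :=
        (ConcreteCategory.isIso_iff_bijective _).mp hiso2
      have hpq : Ideal.comap ψ q.asIdeal = p :=
        congrArg PrimeSpectrum.asIdeal hq
      subst hpq
      have hψex : ψ (e * x) = 0 := by
        rw [map_mul, hψe, hx, one_mul]
      have step1 : Localization.localRingHom
          ((PrimeSpectrum.comap (CommRingCat.ofHom ψ).hom) q).asIdeal q.asIdeal
          (CommRingCat.ofHom ψ).hom rfl
          (algebraMap (↑(CommRingCat.of R)) (Localization.AtPrime
            ((PrimeSpectrum.comap (CommRingCat.ofHom ψ).hom) q).asIdeal) (e * x)) =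
          algebraMap D (Localization.AtPrime q.asIdeal) (ψ (e * x)) :=
        Localization.localRingHom_to_map _ _ _ _ _
      have step2 : algebraMap D (Localization.AtPrime q.asIdeal)
          (ψ (e * x)) = 0 := by rw [hψex, map_zero]
      have hz0 : Localization.localRingHom
          ((PrimeSpectrum.comap (CommRingCat.ofHom ψ).hom) q).asIdeal q.asIdeal
          (CommRingCat.ofHom ψ).hom rfl 0 = 0 := map_zero _
      exact hbij.injective ((step1.trans step2).trans hz0.symm)
  -- kernel of ψ is the span of 1 - e
  have hkereq : RingHom.ker ψ = Ideal.span {1 - e} := by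
    apply le_antisymm
    · intro x hx
      rw [RingHom.mem_ker] at hx
      rw [Ideal.mem_span_singleton']
      refine ⟨x, ?_⟩
      have := hker x hx
      calc x * (1 - e) = x - e * x := by ring
        _ = x := by rw [this, sub_zero]
    · rw [Ideal.span_le]
      rintro y ⟨rfl⟩
      simp only [SetLike.mem_coe, RingHom.mem_ker, map_sub, map_one, hψe, sub_self]
  -- the two ideals are complementary
  have hinf : Ideal.span {1 - e} ⊓ Ideal.span {e} = ⊥ := by
    apply le_bot_iff.mp
    intro x hx
    obtain ⟨h1, h2⟩ := Ideal.mem_inf.mp hx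
    obtain ⟨a, ha⟩ := Ideal.mem_span_singleton'.mp h1
    obtain ⟨d, hd⟩ := Ideal.mem_span_singleton'.mp h2
    have hxe : x * e = x := by rw [← hd, mul_assoc, he.eq]
    have : x * e = 0 := by
      rw [← ha, mul_assoc]
      have : (1 - e) * e = 0 := by rw [sub_mul, one_mul, he.eq, sub_self]
      rw [this, mul_zero]
    simpa [hxe] using this
  have hcop : IsCoprime (Ideal.span {(1 : R) - e}) (Ideal.span {e}) := by
    rw [Ideal.isCoprime_iff_exists]
    exact ⟨1 - e, Ideal.subset_span rfl, e, Ideal.subset_span rfl, by ring⟩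
  -- assemble the ring equivalence
  refine ⟨R ⧸ Ideal.span {e}, inferInstance, ⟨?_⟩⟩
  have E1 : R ≃+* R ⧸ (Ideal.span {(1 : R) - e} ⊓ Ideal.span {e}) :=
    (RingEquiv.quotientBot R).symm.trans (Ideal.quotEquivOfEq hinf.symm)
  have E2 : R ⧸ (Ideal.span {(1 : R) - e} ⊓ Ideal.span {e}) ≃+*
      (R ⧸ Ideal.span {(1 : R) - e}) × (R ⧸ Ideal.span {e}) :=
    Ideal.quotientInfEquivQuotientProd _ _ hcop
  have E3 : R ⧸ Ideal.span {(1 : R) - e} ≃+* D :=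
    (Ideal.quotEquivOfEq hkereq.symm).trans (RingHom.quotientKerEquivOfSurjective hsurj)
  exact E1.trans (E2.trans (RingEquiv.prodCongr E3 (RingEquiv.refl _)))
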